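/- Fix ε > 0 and let a : ℝ → ℝ be a function such that for every δ ∈ (0,1), erfc(a(δ)) − e^ε · erfc(√(a(δ)² + ε)) = 2δ. Then (a(δ) + √(a(δ)² + ε)) / (2·√(ln(1/δ))) tends to 1 as δ → 0 from the right. (Equivalently, given fixed ε, the optimal Gaussian noise amount σ_DP-OPT for (ε,δ)-differential privacy satisfies lim_{δ→0} σ_DP-OPT / ((Δ/ε)·√(2 ln(1/δ))) = 1, so σ_DP-OPT = Θ(√(ln(1/δ))) as δ → 0.) -/

import Mathlib

open Real

/-- The Gauss error function `erf x = (2/√π) ∫₀ˣ e^{−t²} dt`. -/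
noncomputable def erf (x : ℝ) : ℝ := 2 / Real.sqrt Real.pi * ∫ t in (0:ℝ)..x, Real.exp (-t ^ 2)

/-- The complementary error function `erfc x = 1 - erf x`. -/
noncomputable def erfc (x : ℝ) : ℝ := 1 - erf x

set_option maxHeartbeats 10000000

open Set MeasureTheory Filter

noncomputable def gint (x : ℝ) : ℝ := ∫ t in Set.Ioi x, Real.exp (-t ^ 2)

lemma integrable_gauss : Integrable (fun t : ℝ => Real.exp (-t ^ 2)) := by
  have := integrable_exp_neg_mul_sq (b := 1) one_pos
  simpa using this

lemma gint_zero : gint 0 = Real.sqrt Real.pi / 2 := by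
  have := integral_gaussian_Ioi 1
  simpa [gint] using this

lemma gint_eq (x : ℝ) : gint x = Real.sqrt Real.pi / 2 - ∫ t in (0:ℝ)..x, Real.exp (-t ^ 2) := by
  have h1 : ∀ y : ℝ, (∫ t in Set.Iic y, Real.exp (-t ^ 2)) + gint y
      = ∫ t : ℝ, Real.exp (-t ^ 2) := fun y =>
    intervalIntegral.integral_Iic_add_Ioi integrable_gauss.integrableOn integrable_gauss.integrableOn
  have h2 : ((∫ t in Set.Iic x, Real.exp (-t ^ 2)) - ∫ t in Set.Iic (0:ℝ), Real.exp (-t ^ 2))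
      = ∫ t in (0:ℝ)..x, Real.exp (-t ^ 2) :=
    intervalIntegral.integral_Iic_sub_Iic integrable_gauss.integrableOn integrable_gauss.integrableOn
  have h3 := h1 x
  have h4 := h1 0
  rw [← gint_zero]
  linarith

lemma erfc_eq (x : ℝ) : erfc x = 2 / Real.sqrt Real.pi * gint x := by
  have hπ : Real.sqrt Real.pi ≠ 0 := by positivity
  rw [erfc, erf, gint_eq]
  field_simp

lemma gint_pos (x : ℝ) : 0 < gint x := by
  rw [gint]
  rw [setIntegral_pos_iff_support_of_nonneg_ae]
  · have : Function.support (fun t : ℝ => Real.exp (-t ^ 2)) = Set.univ := by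
      ext t; simp [Real.exp_ne_zero]
    rw [this]
    simpa using measure_Ioi_pos (volume : Measure ℝ) x
  · filter_upwards with t using (Real.exp_pos _).le
  · exact integrable_gauss.integrableOn

lemma hasDerivAt_gint (x : ℝ) : HasDerivAt gint (-(Real.exp (-x ^ 2))) x := by
  have h : HasDerivAt (fun u => ∫ t in (0:ℝ)..u, Real.exp (-t ^ 2)) (Real.exp (-x ^ 2)) x :=
    intervalIntegral.integral_hasDerivAt_right
      integrable_gauss.intervalIntegrable
      integrable_gauss.aestronglyMeasurable.stronglyMeasurableAtFilter
      (Continuous.continuousAt (by continuity))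
  have h2 : HasDerivAt (fun u => Real.sqrt Real.pi / 2 - ∫ t in (0:ℝ)..u, Real.exp (-t ^ 2))
      (-(Real.exp (-x ^ 2))) x := h.const_sub _
  exact h2.congr_of_eventuallyEq (Filter.Eventually.of_forall fun y => (gint_eq y))

lemma gint_tendsto_zero : Tendsto gint atTop (nhds 0) := by
  have h : Tendsto (fun b => ∫ t in (0:ℝ)..b, Real.exp (-t ^ 2)) atTop
      (nhds (∫ t in Set.Ioi (0:ℝ), Real.exp (-t ^ 2))) :=
    intervalIntegral_tendsto_integral_Ioi 0 integrable_gauss.integrableOn tendsto_id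
  have h2 : Tendsto (fun b => Real.sqrt Real.pi / 2 - ∫ t in (0:ℝ)..b, Real.exp (-t ^ 2)) atTop
      (nhds (Real.sqrt Real.pi / 2 - Real.sqrt Real.pi / 2)) :=
    tendsto_const_nhds.sub (by rw [show (∫ t in Set.Ioi (0:ℝ), Real.exp (-t ^ 2)) = Real.sqrt Real.pi / 2 from gint_zero ▸ rfl] at h; exact h)
  rw [sub_self] at h2
  exact h2.congr (fun b => (gint_eq b).symm)

noncomputable def gU (x : ℝ) : ℝ := Real.exp (-x^2) * ((4*x^4 - 2*x^2 + 3)/(8*x^5))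
noncomputable def gL (x : ℝ) : ℝ := Real.exp (-x^2) * ((2*x^2 - 1)/(4*x^3))

lemma hasDerivAt_expneg (x : ℝ) :
    HasDerivAt (fun x : ℝ => Real.exp (-x^2)) (Real.exp (-x^2) * (-(2*x))) x := by
  have h1 : HasDerivAt (fun x : ℝ => -x^2) (-(2*x)) x := by
    have := (hasDerivAt_pow 2 x).neg
    exact this.congr_deriv (by push_cast; ring)
  exact h1.exp

lemma hasDerivAt_gU {x : ℝ} (hx : x ≠ 0) :
    HasDerivAt gU (Real.exp (-x^2) * (-1 - 15/(8*x^6))) x := by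
  have hden : (8:ℝ)*x^5 ≠ 0 := by
    simp [hx]
  have hnum : HasDerivAt (fun x:ℝ => 4*x^4 - 2*x^2 + 3) (16*x^3 - 4*x) x := by
    have h := (((hasDerivAt_pow 4 x).const_mul (4:ℝ)).sub ((hasDerivAt_pow 2 x).const_mul (2:ℝ))).add_const 3
    exact h.congr_deriv (by push_cast; ring)
  have hden' : HasDerivAt (fun x:ℝ => 8*x^5) (40*x^4) x := by
    have h := (hasDerivAt_pow 5 x).const_mul (8:ℝ)
    exact h.congr_deriv (by push_cast; ring)
  have hd := hnum.div hden' hden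
  have h2 := (hasDerivAt_expneg x).mul hd
  refine h2.congr_deriv ?_
  simp only [Pi.div_apply]
  field_simp
  ring

lemma hasDerivAt_gL {x : ℝ} (hx : x ≠ 0) :
    HasDerivAt gL (Real.exp (-x^2) * (-1 + 3/(4*x^4))) x := by
  have hden : (4:ℝ)*x^3 ≠ 0 := by simp [hx]
  have hnum : HasDerivAt (fun x:ℝ => 2*x^2 - 1) (4*x) x := by
    have h := ((hasDerivAt_pow 2 x).const_mul (2:ℝ)).sub_const 1
    exact h.congr_deriv (by push_cast; ring)
  have hden' : HasDerivAt (fun x:ℝ => 4*x^3) (12*x^2) x := by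
    have h := (hasDerivAt_pow 3 x).const_mul (4:ℝ)
    exact h.congr_deriv (by push_cast; ring)
  have hd := hnum.div hden' hden
  have h2 := (hasDerivAt_expneg x).mul hd
  refine h2.congr_deriv ?_
  simp only [Pi.div_apply]
  field_simp
  ring

lemma expneg_tendsto_zero : Tendsto (fun x : ℝ => Real.exp (-x^2)) atTop (nhds 0) := by
  apply Real.tendsto_exp_atBot.comp
  have h : Tendsto (fun x : ℝ => x^2) atTop atTop := tendsto_pow_atTop (by norm_num)
  exact tendsto_neg_atBot_iff.mpr h

lemma gU_tendsto_zero : Tendsto gU atTop (nhds 0) := by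
  apply squeeze_zero' (t₀ := atTop) ?_ ?_ expneg_tendsto_zero
  · filter_upwards [eventually_ge_atTop (1:ℝ)] with x hx
    have h1 : (0:ℝ) < x := by linarith
    have h2 : (0:ℝ) ≤ (4*x^4 - 2*x^2 + 3)/(8*x^5) := by
      apply div_nonneg _ (by positivity)
      nlinarith [sq_nonneg (x^2 - 1), sq_nonneg x]
    rw [gU]; exact mul_nonneg (Real.exp_pos _).le h2
  · filter_upwards [eventually_ge_atTop (1:ℝ)] with x hx
    have h1 : (0:ℝ) < x := by linarith
    rw [gU]
    have h2 : (4*x^4 - 2*x^2 + 3)/(8*x^5) ≤ 1 := by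
      rw [div_le_one (by positivity)]
      have e1 : (1:ℝ) ≤ x^4 := one_le_pow₀ hx
      have e2 : x^4 ≤ x^5 := by nlinarith
      nlinarith
    nlinarith [Real.exp_pos (-x^2), mul_le_of_le_one_right (Real.exp_pos (-x^2)).le h2]

lemma gL_tendsto_zero : Tendsto gL atTop (nhds 0) := by
  apply squeeze_zero' (t₀ := atTop) ?_ ?_ expneg_tendsto_zero
  · filter_upwards [eventually_ge_atTop (1:ℝ)] with x hx
    have h1 : (0:ℝ) < x := by linarith
    have h2 : (0:ℝ) ≤ (2*x^2 - 1)/(4*x^3) := by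
      apply div_nonneg _ (by positivity)
      nlinarith
    rw [gL]; exact mul_nonneg (Real.exp_pos _).le h2
  · filter_upwards [eventually_ge_atTop (1:ℝ)] with x hx
    have h1 : (0:ℝ) < x := by linarith
    rw [gL]
    have h2 : (2*x^2 - 1)/(4*x^3) ≤ 1 := by
      rw [div_le_one (by positivity)]
      nlinarith
    nlinarith [Real.exp_pos (-x^2), mul_le_of_le_one_right (Real.exp_pos (-x^2)).le h2]

lemma pos_of_strictAntiOn_tendsto {g : ℝ → ℝ} (hg : StrictAntiOn g (Set.Ioi 0))
    (h0 : Tendsto g atTop (nhds 0)) {x : ℝ} (hx : 0 < x) : 0 < g x := by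
  have h1 : (0:ℝ) ≤ g (x + 1) := by
    apply le_of_tendsto h0
    filter_upwards [eventually_gt_atTop (x+1)] with y hy
    exact (hg (by simp; linarith : (x+1) ∈ Set.Ioi (0:ℝ)) (by simp; linarith) hy).le
  have h2 : g (x + 1) < g x := hg (by simpa using hx) (by simp; linarith) (by linarith)
  linarith

lemma gint_lt_gU {x : ℝ} (hx : 0 < x) : gint x < gU x := by
  have key : 0 < gU x - gint x := by
    apply pos_of_strictAntiOn_tendsto _ (by simpa using gU_tendsto_zero.sub gint_tendsto_zero) hx
    apply strictAntiOn_of_deriv_neg (convex_Ioi 0)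
    · intro y hy
      exact ((hasDerivAt_gU (ne_of_gt hy)).sub (hasDerivAt_gint y)).continuousAt.continuousWithinAt
    · intro y hy
      rw [interior_Ioi] at hy
      have hy0 : (0:ℝ) < y := hy
      refine (((hasDerivAt_gU (ne_of_gt hy0)).sub (hasDerivAt_gint y)).deriv).trans_lt ?_
      have : Real.exp (-y^2) * (-1 - 15/(8*y^6)) - -Real.exp (-y^2)
          = -(Real.exp (-y^2) * (15/(8*y^6))) := by ring
      rw [this]
      have : 0 < Real.exp (-y^2) * (15/(8*y^6)) := by positivity
      linarith
  linarith

lemma gL_lt_gint {x : ℝ} (hx : 0 < x) : gL x < gint x := by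
  have key : 0 < gint x - gL x := by
    apply pos_of_strictAntiOn_tendsto _ (by simpa using gint_tendsto_zero.sub gL_tendsto_zero) hx
    apply strictAntiOn_of_deriv_neg (convex_Ioi 0)
    · intro y hy
      exact ((hasDerivAt_gint y).sub (hasDerivAt_gL (ne_of_gt hy))).continuousAt.continuousWithinAt
    · intro y hy
      rw [interior_Ioi] at hy
      have hy0 : (0:ℝ) < y := hy
      refine (((hasDerivAt_gint y).sub (hasDerivAt_gL (ne_of_gt hy0))).deriv).trans_lt ?_
      have heq : -Real.exp (-y^2) - Real.exp (-y^2) * (-1 + 3/(4*y^4))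
          = -(Real.exp (-y^2) * (3/(4*y^4))) := by ring
      rw [heq]
      have : 0 < Real.exp (-y^2) * (3/(4*y^4)) := by positivity
      linarith
  linarith

set_option maxHeartbeats 1000000 in
lemma _dummy : True := trivial

noncomputable def Fi (ε : ℝ) (x : ℝ) : ℝ := gint x - Real.exp ε * gint (Real.sqrt (x^2 + ε))

lemma hasDerivAt_sqrtsq {ε : ℝ} (hε : 0 < ε) (x : ℝ) :
    HasDerivAt (fun a : ℝ => Real.sqrt (a^2+ε)) (x / Real.sqrt (x^2+ε)) x := by
  have hpos : (0:ℝ) < x^2 + ε := by positivity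
  have hinner : HasDerivAt (fun a : ℝ => a^2 + ε) (2*x) x := by
    have := (hasDerivAt_pow 2 x).add_const ε
    exact this.congr_deriv (by push_cast; ring)
  have hsq := (Real.hasDerivAt_sqrt (ne_of_gt hpos)).comp x hinner
  refine hsq.congr_deriv ?_
  have : Real.sqrt (x^2+ε) ≠ 0 := by positivity
  field_simp

lemma Fi_strictAnti {ε : ℝ} (hε : 0 < ε) : StrictAnti (Fi ε) := by
  apply strictAnti_of_deriv_neg
  intro x
  have hpos : (0:ℝ) < x^2 + ε := by positivity
  set s := Real.sqrt (x^2+ε) with hs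
  have hs0 : 0 < s := Real.sqrt_pos.mpr hpos
  have hs2 : s^2 = x^2 + ε := Real.sq_sqrt hpos.le
  have hcomp : HasDerivAt (fun a : ℝ => gint (Real.sqrt (a^2+ε)))
      (-(Real.exp (-s^2)) * (x / s)) x :=
    (hasDerivAt_gint s).comp (h := fun a : ℝ => Real.sqrt (a^2+ε)) x (hasDerivAt_sqrtsq hε x)
  have hF : HasDerivAt (Fi ε)
      (-(Real.exp (-x^2)) - Real.exp ε * (-(Real.exp (-s^2)) * (x / s))) x :=
    (hasDerivAt_gint x).sub (hcomp.const_mul (Real.exp ε))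
  rw [hF.deriv]
  have hexp : Real.exp ε * Real.exp (-s^2) = Real.exp (-x^2) * Real.exp (-ε) * Real.exp ε := by
    rw [← Real.exp_add, ← Real.exp_add, ← Real.exp_add, hs2]; ring_nf
  have hexp2 : Real.exp ε * Real.exp (-s^2) = Real.exp (-x^2) := by
    rw [← Real.exp_add, hs2]; ring_nf
  have hxs : x / s < 1 := by
    rcases le_or_gt x 0 with h | h
    · calc x / s ≤ 0 := div_nonpos_of_nonpos_of_nonneg h hs0.le
        _ < 1 := one_pos
    · rw [div_lt_one hs0]
      have : x = Real.sqrt (x^2) := by rw [Real.sqrt_sq h.le]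
      rw [this, hs]
      exact Real.sqrt_lt_sqrt (by positivity) (by nlinarith)
  have hrw : -(Real.exp (-x^2)) - Real.exp ε * (-(Real.exp (-s^2)) * (x / s))
      = Real.exp (-x^2) * (x/s - 1) := by
    rw [show Real.exp ε * (-(Real.exp (-s^2)) * (x / s)) = -(Real.exp ε * Real.exp (-s^2) * (x/s)) by ring, hexp2]
    ring
  rw [hrw]
  have := Real.exp_pos (-x^2)
  nlinarith

lemma Fi_lower {ε : ℝ} (hε : 0 < ε) {x : ℝ} (h1x : 1 ≤ x) (h2x : ε ≤ x^2)
    (h3x : 3*(7*ε+3) ≤ ε * x^2) :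
    Real.exp (-x^2) * (ε/(24*x^3)) ≤ Fi ε x := by
  have hx0 : (0:ℝ) < x := by linarith
  have hpos : (0:ℝ) < x^2 + ε := by positivity
  set s := Real.sqrt (x^2+ε) with hs
  have hs0 : 0 < s := Real.sqrt_pos.mpr hpos
  have hs2 : s^2 = x^2 + ε := Real.sq_sqrt hpos.le
  have hxs : x ≤ s := by
    calc x = Real.sqrt (x^2) := (Real.sqrt_sq hx0.le).symm
      _ ≤ s := Real.sqrt_le_sqrt (by nlinarith)
  have hs2x : s ≤ 2*x := by
    calc s ≤ Real.sqrt ((2*x)^2) := Real.sqrt_le_sqrt (by nlinarith)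
      _ = 2*x := Real.sqrt_sq (by linarith)
  -- main bracket inequality
  have hd : (s - x) * (s + x) = ε := by nlinarith
  have key : ε/(24*x^3) ≤ (2*x^2-1)/(4*x^3) - (4*s^4 - 2*s^2 + 3)/(8*s^5) := by
    have e1 : (2*x^2-1)/(4*x^3) = 1/(2*x) - 1/(4*x^3) := by field_simp; ring
    have e2 : (4*s^4 - 2*s^2 + 3)/(8*s^5) = 1/(2*s) - 1/(4*s^3) + 3/(8*s^5) := by
      field_simp; ring
    rw [e1, e2]
    have h1 : ε/(12*x^3) ≤ 1/(2*x) - 1/(2*s) := by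
      have e3 : 1/(2*x) - 1/(2*s) = (s-x)/(2*x*s) := by field_simp
      rw [e3, div_le_div_iff₀ (by positivity) (by positivity)]
      -- ε * (2*x*s) ≤ (s-x) * (12*x^3)
      have hd2 : ε ≤ 3*x*(s-x) := by nlinarith
      nlinarith [mul_nonneg (sub_nonneg.mpr hxs) (mul_pos hx0 hx0).le]
    have h2 : -(7*ε/(8*x^5)) ≤ 1/(4*s^3) - 1/(4*x^3) := by
      have e4 : 1/(4*s^3) - 1/(4*x^3) = -((s^3-x^3)/(4*x^3*s^3)) := by field_simp; ring
      rw [e4, neg_le_neg_iff, div_le_div_iff₀ (by positivity) (by positivity)]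
      -- (s^3-x^3) * (8*x^5) ≤ 7*ε * (4*x^3*s^3)
      have hd3 : 2*x*(s-x) ≤ ε := by nlinarith
      have hcube : s^3 - x^3 ≤ (s-x) * (7*x^2) := by nlinarith [sub_nonneg.mpr hxs]
      have hsx3 : x^3 ≤ s^3 := by nlinarith
      nlinarith [mul_le_mul_of_nonneg_right hcube (by positivity : (0:ℝ) ≤ 8*x^5),
        mul_le_mul_of_nonneg_left hsx3 (mul_nonneg (by positivity : (0:ℝ) ≤ 56*x^4) (sub_nonneg.mpr hxs)),
        mul_le_mul_of_nonneg_right hd3 (by positivity : (0:ℝ) ≤ 28*x^3*s^3)]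
    have h3 : 3/(8*s^5) ≤ 3/(8*x^5) := by
      rw [div_le_div_iff₀ (by positivity) (by positivity)]
      nlinarith [pow_le_pow_left₀ hx0.le hxs 5]
    have h4 : 7*ε/(8*x^5) + 3/(8*x^5) ≤ ε/(24*x^3) := by
      rw [← add_div, div_le_div_iff₀ (by positivity) (by positivity)]
      -- (7ε+3) * 24x³ ≤ ε * 8x⁵
      nlinarith [mul_le_mul_of_nonneg_left h3x (by positivity : (0:ℝ) ≤ 8*x^3)]
    have h5 : ε/(12*x^3) = 2*(ε/(24*x^3)) := by ring
    linarith
  -- assemble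
  have hgL : gL x < gint x := gL_lt_gint hx0
  have hgU : gint s < gU s := gint_lt_gU hs0
  have hexp2 : Real.exp ε * Real.exp (-s^2) = Real.exp (-x^2) := by
    rw [← Real.exp_add, hs2]; ring_nf
  have hFi : gL x - Real.exp ε * gU s ≤ Fi ε x := by
    have := mul_lt_mul_of_pos_left hgU (Real.exp_pos ε)
    rw [Fi]
    linarith
  have hgUval : Real.exp ε * gU s = Real.exp (-x^2) * ((4*s^4 - 2*s^2 + 3)/(8*s^5)) := by
    rw [gU, ← mul_assoc, hexp2]
  have hgLval : gL x = Real.exp (-x^2) * ((2*x^2-1)/(4*x^3)) := rfl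
  calc Real.exp (-x^2) * (ε/(24*x^3))
      ≤ Real.exp (-x^2) * ((2*x^2-1)/(4*x^3) - (4*s^4 - 2*s^2 + 3)/(8*s^5)) :=
        mul_le_mul_of_nonneg_left key (Real.exp_pos _).le
    _ = gL x - Real.exp ε * gU s := by rw [hgLval, hgUval]; ring
    _ ≤ Fi ε x := hFi

lemma gU_le {x : ℝ} (hx : 1 ≤ x) : gU x ≤ Real.exp (-x^2) := by
  have h1 : (0:ℝ) < x := by linarith
  rw [gU]
  have h2 : (4*x^4 - 2*x^2 + 3)/(8*x^5) ≤ 1 := by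
    rw [div_le_one (by positivity)]
    have e1 : (1:ℝ) ≤ x^4 := one_le_pow₀ hx
    have e2 : x^4 ≤ x^5 := by nlinarith
    nlinarith
  nlinarith [Real.exp_pos (-x^2), mul_le_of_le_one_right (Real.exp_pos (-x^2)).le h2]

lemma Fi_pos {ε : ℝ} (hε : 0 < ε) (x : ℝ) : 0 < Fi ε x := by
  set c := max (x+1) (1 + Real.sqrt ε + Real.sqrt (3*(7*ε+3)/ε)) with hc
  have hs1 : (0:ℝ) ≤ Real.sqrt ε := Real.sqrt_nonneg _
  have hs2 : (0:ℝ) ≤ Real.sqrt (3*(7*ε+3)/ε) := Real.sqrt_nonneg _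
  have hc1 : 1 ≤ c := le_trans (by linarith) (le_max_right _ _)
  have hcε : Real.sqrt ε ≤ c := le_trans (by linarith) (le_max_right _ _)
  have hcD : Real.sqrt (3*(7*ε+3)/ε) ≤ c := le_trans (by linarith) (le_max_right _ _)
  have h2 : ε ≤ c^2 := by
    calc ε = (Real.sqrt ε)^2 := (Real.sq_sqrt hε.le).symm
      _ ≤ c^2 := pow_le_pow_left₀ hs1 hcε 2
  have h3 : 3*(7*ε+3) ≤ ε * c^2 := by
    have : 3*(7*ε+3)/ε ≤ c^2 := by
      calc 3*(7*ε+3)/ε = (Real.sqrt (3*(7*ε+3)/ε))^2 := (Real.sq_sqrt (by positivity)).symm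
        _ ≤ c^2 := pow_le_pow_left₀ hs2 hcD 2
    rw [div_le_iff₀ hε] at this
    linarith
  have hpos : 0 < Fi ε c :=
    lt_of_lt_of_le (by positivity) (Fi_lower hε hc1 h2 h3)
  have hxc : x < c := lt_of_lt_of_le (by linarith) (le_max_left _ _)
  exact lt_trans hpos (Fi_strictAnti hε hxc)

lemma exp_ge_quarter_pow {z : ℝ} (hz : 0 ≤ z) : (z/4)^4 ≤ Real.exp z := by
  have h1 : z/4 ≤ Real.exp (z/4) := by linarith [Real.add_one_le_exp (z/4)]
  calc (z/4)^4 ≤ (Real.exp (z/4))^4 := pow_le_pow_left₀ (by positivity) h1 4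
    _ = Real.exp ((4:ℕ) * (z/4)) := by rw [Real.exp_nat_mul]
    _ = Real.exp z := by congr 1; push_cast; ring

/-- Fix `ε > 0`. If `a : ℝ → ℝ` satisfies, for all `δ ∈ (0,1)`,
`erfc (a δ) − e^ε · erfc (√((a δ)² + ε)) = 2δ`, then
`(a δ + √((a δ)² + ε)) / (2·√(ln(1/δ))) → 1` as `δ → 0⁺`. -/
theorem sigma_DP_OPT_asymptotics_small_delta (ε : ℝ) (hε : 0 < ε)
    (a : ℝ → ℝ)
    (ha : ∀ δ : ℝ, 0 < δ → δ < 1 →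
      erfc (a δ) - Real.exp ε * erfc (Real.sqrt ((a δ) ^ 2 + ε)) = 2 * δ) :
    Filter.Tendsto
      (fun δ : ℝ => (a δ + Real.sqrt ((a δ) ^ 2 + ε)) / (2 * Real.sqrt (Real.log (1 / δ))))
      (nhdsWithin 0 (Set.Ioi 0)) (nhds 1) := by
  have sqpi1 : (1:ℝ) ≤ Real.sqrt π := by
    rw [show (1:ℝ) = Real.sqrt 1 by simp]
    exact Real.sqrt_le_sqrt (by linarith [Real.pi_gt_three])
  have sqpi2 : Real.sqrt π ≤ 2 := by
    rw [show (2:ℝ) = Real.sqrt 4 by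
      rw [show (4:ℝ) = 2^2 by norm_num, Real.sqrt_sq (by norm_num : (0:ℝ) ≤ 2)]]
    exact Real.sqrt_le_sqrt (by linarith [Real.pi_le_four])
  have sqpi0 : (0:ℝ) < Real.sqrt π := by linarith
  have hFi : ∀ δ : ℝ, 0 < δ → δ < 1 → Fi ε (a δ) = Real.sqrt π * δ := by
    intro δ h0 h1
    have h := ha δ h0 h1
    rw [erfc_eq, erfc_eq] at h
    have h2 := congrArg (fun t => Real.sqrt π * t) h
    rw [Fi]
    have hne : Real.sqrt π ≠ 0 := ne_of_gt sqpi0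
    field_simp at h2
    nlinarith [h2]
  rw [Metric.tendsto_nhds]
  intro η hη
  obtain ⟨θ, hθdef⟩ : ∃ t : ℝ, t = min η 1 := ⟨_, rfl⟩
  have hθ0 : 0 < θ := by rw [hθdef]; exact lt_min hη one_pos
  have hθ1 : θ ≤ 1 := by rw [hθdef]; exact min_le_right _ _
  have hθη : θ ≤ η := by rw [hθdef]; exact min_le_left _ _
  obtain ⟨M, hM⟩ : ∃ m : ℝ,
      m = 1 + Real.sqrt ε + Real.sqrt (3*(7*ε+3)/ε) + 3145728/(ε*θ^4) + ε/θ := ⟨_, rfl⟩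
  have hs1 : (0:ℝ) ≤ Real.sqrt ε := Real.sqrt_nonneg _
  have hs2 : (0:ℝ) ≤ Real.sqrt (3*(7*ε+3)/ε) := Real.sqrt_nonneg _
  have ht4 : (0:ℝ) ≤ 3145728/(ε*θ^4) := by positivity
  have ht5 : (0:ℝ) ≤ ε/θ := by positivity
  have hFiM : 0 < Fi ε M := Fi_pos hε M
  obtain ⟨r, hr⟩ : ∃ t : ℝ, t = min (min 1 (Real.exp (-(4/θ)))) (Fi ε M / Real.sqrt π) := ⟨_, rfl⟩
  have hr0 : 0 < r := by rw [hr]; exact lt_min (lt_min one_pos (Real.exp_pos _)) (by positivity)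
  have hev : Set.Ioo (0:ℝ) r ∈ nhdsWithin (0:ℝ) (Set.Ioi 0) :=
    Ioo_mem_nhdsGT hr0
  filter_upwards [hev] with δ hδ
  obtain ⟨h0, hδr⟩ := hδ
  rw [hr] at hδr
  have h1 : δ < 1 := lt_of_lt_of_le hδr (le_trans (min_le_left _ _) (min_le_left _ _))
  have hδe : δ < Real.exp (-(4/θ)) :=
    lt_of_lt_of_le hδr (le_trans (min_le_left _ _) (min_le_right _ _))
  have hδF : δ < Fi ε M / Real.sqrt π := lt_of_lt_of_le hδr (min_le_right _ _)
  set A := a δ with hAdef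
  clear_value A
  set L := Real.log (1/δ) with hLdef
  clear_value L
  have hFiA : Fi ε A = Real.sqrt π * δ := by rw [hAdef]; exact hFi δ h0 h1
  -- A > M
  have hMA : M < A := by
    have hlt : Fi ε A < Fi ε M := by
      rw [hFiA, mul_comm]
      exact (lt_div_iff₀ sqpi0).mp hδF
    exact ((Fi_strictAnti hε).lt_iff_gt).mp hlt
  have hA1 : 1 ≤ A := by linarith
  have hA0 : 0 < A := by linarith
  have hAε : ε ≤ A^2 := by
    calc ε = (Real.sqrt ε)^2 := (Real.sq_sqrt hε.le).symm
      _ ≤ A^2 := pow_le_pow_left₀ hs1 (by linarith) 2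
  have hA3 : 3*(7*ε+3) ≤ ε * A^2 := by
    have h3 : 3*(7*ε+3)/ε ≤ A^2 := by
      calc 3*(7*ε+3)/ε = (Real.sqrt (3*(7*ε+3)/ε))^2 := (Real.sq_sqrt (by positivity)).symm
        _ ≤ A^2 := pow_le_pow_left₀ hs2 (by linarith) 2
    rw [div_le_iff₀ hε] at h3
    linarith
  have hA4 : 3145728/(ε*θ^4) ≤ A := by linarith
  have hA5 : ε ≤ θ*A := by
    have h4 : ε/θ ≤ A := by linarith
    rw [div_le_iff₀ hθ0] at h4
    linarith
  clear ha hFi hδF hMA hev hδr hr0 hFiM hr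
  clear r M hM
  set S := Real.sqrt (A^2+ε) with hSdef
  clear_value S
  have hS2 : S^2 = A^2 + ε := by rw [hSdef]; exact Real.sq_sqrt (by positivity)
  have hS0 : 0 < S := by rw [hSdef]; exact Real.sqrt_pos.mpr (by positivity)
  have hAS : A ≤ S := by
    rw [hSdef]
    calc A = Real.sqrt (A^2) := (Real.sqrt_sq hA0.le).symm
      _ ≤ Real.sqrt (A^2+ε) := Real.sqrt_le_sqrt (by linarith)
  -- upper bound : A² < L
  have hup : A^2 < L := by
    have hFile : Fi ε A ≤ gint A := by
      rw [Fi]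
      nlinarith [gint_pos (Real.sqrt (A^2+ε)), Real.exp_pos ε]
    have h2 : Real.sqrt π * δ < Real.exp (-A^2) := by
      rw [← hFiA]
      calc Fi ε A ≤ gint A := hFile
        _ < gU A := gint_lt_gU hA0
        _ ≤ Real.exp (-A^2) := gU_le hA1
    have hδlt : δ < Real.exp (-A^2) := by nlinarith
    have h5 := Real.log_lt_log h0 hδlt
    rw [Real.log_exp] at h5
    rw [hLdef, one_div, Real.log_inv]
    linarith
  -- lower bound : L ≤ (1+θ/4) A²
  have hlow : L ≤ (1+θ/4)*A^2 := by
    have hz : (0:ℝ) ≤ θ/4*A^2 := by positivity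
    have hexpz : (θ/4*A^2/4)^4 ≤ Real.exp (θ/4*A^2) := exp_ge_quarter_pow hz
    have hA4' : 3145728 ≤ A*(ε*θ^4) := (div_le_iff₀ (by positivity)).mp hA4
    have hA8 : A^4 ≤ A^8 := pow_le_pow_right₀ hA1 (by norm_num)
    have key : 48*A^3 ≤ ε * Real.exp (θ/4*A^2) := by
      have step1 : 48*A^3 ≤ ε * ((θ/4*A^2/4)^4) := by
        nlinarith [mul_le_mul_of_nonneg_right hA4' (pow_nonneg hA0.le 3), hA8,
          pow_nonneg hA0.le 3, pow_nonneg hA0.le 8, sq_nonneg θ]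
      calc 48*A^3 ≤ ε * ((θ/4*A^2/4)^4) := step1
        _ ≤ ε * Real.exp (θ/4*A^2) := mul_le_mul_of_nonneg_left hexpz hε.le
    have h6 : 2*Real.exp (-(θ/4*A^2)) ≤ ε/(24*A^3) := by
      have e1 : 2*Real.exp (-(θ/4*A^2)) = 2/Real.exp (θ/4*A^2) := by
        rw [Real.exp_neg]; ring
      rw [e1, div_le_div_iff₀ (Real.exp_pos _) (by positivity)]
      linarith
    have hq : 2*Real.exp (-(1+θ/4)*A^2) ≤ Real.exp (-A^2) * (ε/(24*A^3)) := by
      rw [show -(1+θ/4)*A^2 = -A^2 + -(θ/4*A^2) by ring, Real.exp_add]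
      nlinarith [mul_le_mul_of_nonneg_left h6 (Real.exp_pos (-A^2)).le]
    have h7 : Real.exp (-(1+θ/4)*A^2) ≤ δ := by
      have h8 : Real.exp (-A^2) * (ε/(24*A^3)) ≤ Fi ε A := Fi_lower hε hA1 hAε hA3
      nlinarith [hFiA, hq]
    have h9 := Real.log_le_log (Real.exp_pos _) h7
    rw [Real.log_exp] at h9
    rw [hLdef, one_div, Real.log_inv]
    nlinarith
  -- θ L ≥ 4
  have hLθ : 4 ≤ θ*L := by
    have h5 := Real.log_lt_log h0 hδe
    rw [Real.log_exp] at h5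
    have h6 : 4/θ < L := by rw [hLdef, one_div, Real.log_inv]; linarith
    rw [div_lt_iff₀ hθ0] at h6
    linarith
  clear hδe hFiA h0 h1 hAdef hLdef hSdef δ
  have hL0 : 0 < L := by nlinarith
  have hsqL : 0 < Real.sqrt L := Real.sqrt_pos.mpr hL0
  have hsqL1 : 1 ≤ Real.sqrt L := by
    have hL1 : (1:ℝ) ≤ L := by nlinarith
    calc (1:ℝ) = Real.sqrt 1 := by simp
      _ ≤ Real.sqrt L := Real.sqrt_le_sqrt hL1
  have hAsqL : A ≤ Real.sqrt L := by
    calc A = Real.sqrt (A^2) := (Real.sqrt_sq hA0.le).symm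
      _ ≤ Real.sqrt L := Real.sqrt_le_sqrt hup.le
  have hSup : S ≤ A + ε/(2*A) := by
    have hc : 2*A*(ε/(2*A)) = ε := by field_simp
    have hcpos : 0 ≤ ε/(2*A) := by positivity
    nlinarith [hS2, hc, sq_nonneg (ε/(2*A)), hS0, hA0]
  have hAlb : (1-θ/2)*Real.sqrt L ≤ A := by
    have h7 : (1-θ/2)^2*L ≤ A^2 := by
      have hsq : θ^2 ≤ 1 := by nlinarith
      have hcub : θ^3 ≤ θ := by nlinarith [mul_le_mul_of_nonneg_left hsq hθ0.le]
      have f1 : (1-θ/2)^2*(1+θ/4) ≤ 1 := by nlinarith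
      calc (1-θ/2)^2*L ≤ (1-θ/2)^2*((1+θ/4)*A^2) :=
            mul_le_mul_of_nonneg_left hlow (sq_nonneg _)
        _ = ((1-θ/2)^2*(1+θ/4))*A^2 := by ring
        _ ≤ 1*A^2 := mul_le_mul_of_nonneg_right f1 (sq_nonneg A)
        _ = A^2 := one_mul _
    have he : Real.sqrt ((1-θ/2)^2*L) = (1-θ/2)*Real.sqrt L := by
      rw [Real.sqrt_mul (by positivity) L, Real.sqrt_sq (by linarith)]
    calc (1-θ/2)*Real.sqrt L = Real.sqrt ((1-θ/2)^2*L) := he.symm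
      _ ≤ Real.sqrt (A^2) := Real.sqrt_le_sqrt h7
      _ = A := Real.sqrt_sq hA0.le
  have hεA : ε/(2*A) ≤ θ/2 := by
    rw [div_le_div_iff₀ (by positivity) (by norm_num)]
    nlinarith
  have hEub : (A + S)/(2*Real.sqrt L) ≤ 1 + θ/4 := by
    rw [div_le_iff₀ (by positivity)]
    calc A + S ≤ A + (A + ε/(2*A)) := by linarith
      _ ≤ 2*Real.sqrt L + θ/2 := by linarith
      _ ≤ 2*Real.sqrt L + (θ/2)*Real.sqrt L := by nlinarith
      _ = (1+θ/4)*(2*Real.sqrt L) := by ring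
  have hElb : 1 - θ/2 ≤ (A + S)/(2*Real.sqrt L) := by
    rw [le_div_iff₀ (by positivity)]
    calc (1-θ/2)*(2*Real.sqrt L) = 2*((1-θ/2)*Real.sqrt L) := by ring
      _ ≤ 2*A := by linarith
      _ ≤ A + S := by linarith
  rw [Real.dist_eq]
  have habs : |(A + S)/(2*Real.sqrt L) - 1| ≤ θ/2 :=
    abs_le.mpr ⟨by linarith, by linarith⟩
  calc |(A + S)/(2*Real.sqrt L) - 1| ≤ θ/2 := habs
    _ < θ := by linarith
    _ ≤ η := hθη
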